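/- arXiv:1602.06902 — 2 statements merged into one kernel-verified Lean document; each statement's English description precedes it below -/
import Mathlib

section
/- Let Q_{AB} be a pmf on a finite set A × B with strictly positive minimum μ = min{Q_{AB}(a,b) : (a,b) ∈ supp(Q_{AB})}, and let δ > 0. If A^n ~ Q_A^{⊗n} and B^n ~ Q_B^{⊗n} are independent, then the probability that (A^n, B^n) is jointly δ-strongly letter-typical for Q_{AB} is at most 2^{−n(I(A;B) − 2δ log₂(|A||B|))}, where I(A;B) is the mutual information of Q_{AB}. -/
open Finset

lemma count_sum' {n : ℕ} {Z : Type*} [Fintype Z] [DecidableEq Z] (g : Fin n → Z) (f : Z → ℝ) :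
    ∑ i : Fin n, f (g i) = ∑ z : Z, ((univ.filter (fun i => g i = z)).card : ℝ) * f z := by
  rw [← Finset.sum_fiberwise univ g (fun i => f (g i))]
  refine Finset.sum_congr rfl fun z _ => ?_
  rw [Finset.sum_congr rfl (fun i hi => by rw [(Finset.mem_filter.mp hi).2] :
      ∀ i ∈ univ.filter (fun i => g i = z), f (g i) = f z)]
  simp [mul_comm]

lemma ent_le' {X : Type*} [Fintype X] (p : X → ℝ) (h0 : ∀ x, 0 ≤ p x)
    (h1 : ∑ x, p x = 1) : ∑ x, -(p x * Real.logb 2 (p x)) ≤ Real.logb 2 (Fintype.card X) := by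
  have hne : Nonempty X := by
    by_contra h
    rw [not_nonempty_iff] at h
    rw [Finset.univ_eq_empty, Finset.sum_empty] at h1
    norm_num at h1
  have hX : 0 < (Fintype.card X : ℝ) := by exact_mod_cast Fintype.card_pos
  have hlog2 : 0 < Real.log 2 := Real.log_pos one_lt_two
  have key : ∑ x, -(p x * Real.log (p x * Fintype.card X)) ≤ 0 := by
    have hb : ∀ x, -(p x * Real.log (p x * Fintype.card X)) ≤ (Fintype.card X : ℝ)⁻¹ - p x := by
      intro x
      rcases eq_or_lt_of_le (h0 x) with h | h
      · rw [← h]; simp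
      · have hpK : (0:ℝ) < (p x * Fintype.card X)⁻¹ := by positivity
        have hlog := Real.log_le_sub_one_of_pos hpK
        rw [Real.log_inv] at hlog
        have h4 : p x * -Real.log (p x * Fintype.card X)
            ≤ p x * ((p x * (Fintype.card X:ℝ))⁻¹ - 1) := by
          apply mul_le_mul_of_nonneg_left hlog h.le
        have h6 : p x * (p x * (Fintype.card X:ℝ))⁻¹ = ((Fintype.card X:ℝ))⁻¹ := by
          field_simp
        nlinarith [h4, h6]
    calc ∑ x, -(p x * Real.log (p x * Fintype.card X))
        ≤ ∑ x : X, ((Fintype.card X : ℝ)⁻¹ - p x) := Finset.sum_le_sum fun x _ => hb x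
      _ = 0 := by
          rw [Finset.sum_sub_distrib, h1, Finset.sum_const, Finset.card_univ, nsmul_eq_mul]
          field_simp
          norm_num
  have h2 : ∑ x, -(p x * Real.logb 2 (p x)) - Real.logb 2 (Fintype.card X)
      = (∑ x, -(p x * Real.log (p x * Fintype.card X))) / Real.log 2 := by
    rw [Finset.sum_div]
    have hK : Real.logb 2 (Fintype.card X) = ∑ x, p x * Real.logb 2 (Fintype.card X) := by
      rw [← Finset.sum_mul, h1, one_mul]
    rw [hK, ← Finset.sum_sub_distrib]
    refine Finset.sum_congr rfl fun x _ => ?_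
    rcases eq_or_lt_of_le (h0 x) with h | h
    · rw [← h]; simp
    · rw [Real.log_mul (ne_of_gt h) (ne_of_gt hX), Real.logb, Real.logb]
      field_simp
      ring
  have h3 : (∑ x, -(p x * Real.log (p x * Fintype.card X))) / Real.log 2 ≤ 0 :=
    div_nonpos_iff.mpr (Or.inr ⟨key, hlog2.le⟩)
  linarith

theorem stmt12 {A B : Type*} [Fintype A] [Fintype B] [DecidableEq A] [DecidableEq B]
    (Q : A × B → ℝ) (hQ0 : ∀ z, 0 ≤ Q z) (hQ1 : ∑ z : A × B, Q z = 1)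
    (QA : A → ℝ) (hQA : ∀ a, QA a = ∑ b, Q (a, b))
    (QB : B → ℝ) (hQB : ∀ b, QB b = ∑ a, Q (a, b))
    (μ : ℝ) (hμ0 : 0 < μ) (hμ : ∀ z : A × B, Q z ≠ 0 → μ ≤ Q z)
    (I : ℝ) (hI : I = ∑ z : A × B,
      (if Q z = 0 then 0 else Q z * Real.logb 2 (Q z / (QA z.1 * QB z.2))))
    (δ : ℝ) (hδ : 0 < δ) (n : ℕ) :
    ∑ w ∈ (univ : Finset ((Fin n → A) × (Fin n → B))).filter (fun w =>
        ∀ z : A × B,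
          |((univ.filter (fun i : Fin n => (w.1 i, w.2 i) = z)).card : ℝ) / n - Q z|
              ≤ δ * Q z ∧
          (Q z = 0 → (univ.filter (fun i : Fin n => (w.1 i, w.2 i) = z)).card = 0)),
        (∏ i : Fin n, QA (w.1 i)) * ∏ i : Fin n, QB (w.2 i)
      ≤ (2 : ℝ) ^ (-(n : ℝ) * (I - 2 * δ * Real.logb 2 (Fintype.card A * Fintype.card B))) := by
  classical
  -- nonemptiness and basic facts
  have hne : Nonempty (A × B) := by
    by_contra h
    rw [not_nonempty_iff] at h
    rw [Finset.univ_eq_empty, Finset.sum_empty] at hQ1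
    norm_num at hQ1
  have hneA : Nonempty A := ⟨hne.some.1⟩
  have hneB : Nonempty B := ⟨hne.some.2⟩
  have hcardA : 0 < (Fintype.card A : ℝ) := by exact_mod_cast Fintype.card_pos
  have hcardB : 0 < (Fintype.card B : ℝ) := by exact_mod_cast Fintype.card_pos
  have hQle : ∀ z, Q z ≤ 1 := fun z =>
    hQ1 ▸ Finset.single_le_sum (fun z _ => hQ0 z) (mem_univ z)
  have hQQA : ∀ a b, Q (a, b) ≤ QA a := fun a b => by
    rw [hQA]; exact Finset.single_le_sum (fun b _ => hQ0 (a, b)) (mem_univ b)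
  have hQQB : ∀ a b, Q (a, b) ≤ QB b := fun a b => by
    rw [hQB]; exact Finset.single_le_sum (fun a _ => hQ0 (a, b)) (mem_univ a)
  have hQA0 : ∀ a, 0 ≤ QA a := fun a => by
    rw [hQA]; exact Finset.sum_nonneg fun b _ => hQ0 _
  have hQB0 : ∀ b, 0 ≤ QB b := fun b => by
    rw [hQB]; exact Finset.sum_nonneg fun a _ => hQ0 _
  have hQAsum : ∑ a, QA a = 1 := by
    rw [← hQ1, Fintype.sum_prod_type]
    exact Finset.sum_congr rfl fun a _ => hQA a
  have hQBsum : ∑ b, QB b = 1 := by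
    rw [← hQ1, Fintype.sum_prod_type_right]
    exact Finset.sum_congr rfl fun b _ => hQB b
  have hQA1 : ∀ a, QA a ≤ 1 := fun a =>
    hQAsum ▸ Finset.single_le_sum (fun a _ => hQA0 a) (mem_univ a)
  have hQB1 : ∀ b, QB b ≤ 1 := fun b =>
    hQBsum ▸ Finset.single_le_sum (fun b _ => hQB0 b) (mem_univ b)
  set L : ℝ := Real.logb 2 (Fintype.card A * Fintype.card B) with hLdef
  set E : ℝ := -(n : ℝ) * (I - 2 * δ * L) with hEdef
  set r : A × B → ℝ := fun z =>
    Real.logb 2 (Q z) - Real.logb 2 (QA z.1) - Real.logb 2 (QB z.2) with hrdef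
  have hLsplit : L = Real.logb 2 (Fintype.card A) + Real.logb 2 (Fintype.card B) := by
    rw [hLdef, Real.logb_mul (ne_of_gt hcardA) (ne_of_gt hcardB)]
  -- I in terms of r
  have hIr : I = ∑ z, (if Q z = 0 then 0 else Q z * r z) := by
    rw [hI]
    refine Finset.sum_congr rfl fun z _ => ?_
    by_cases h : Q z = 0
    · simp [h]
    · have hq : 0 < Q z := lt_of_le_of_ne (hQ0 z) (Ne.symm h)
      have ha : 0 < QA z.1 := lt_of_lt_of_le hq (hQQA z.1 z.2)
      have hb : 0 < QB z.2 := lt_of_lt_of_le hq (hQQB z.1 z.2)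
      rw [if_neg h, if_neg h, hrdef]
      rw [Real.logb_div (ne_of_gt hq) (by positivity),
        Real.logb_mul (ne_of_gt ha) (ne_of_gt hb)]
      ring
  -- the T bound
  have hT : ∑ z, (if Q z = 0 then 0 else Q z * |r z|) ≤ 2 * L := by
    have step1 : ∑ z, (if Q z = 0 then 0 else Q z * |r z|)
        ≤ ∑ z : A × B, (-(Q z * Real.logb 2 (Q z))
            + (-(Q z * Real.logb 2 (QA z.1)) + -(Q z * Real.logb 2 (QB z.2)))) := by
      refine Finset.sum_le_sum fun z _ => ?_
      by_cases h : Q z = 0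
      · simp [h]
      · have hq : 0 < Q z := lt_of_le_of_ne (hQ0 z) (Ne.symm h)
        have ha : 0 < QA z.1 := lt_of_lt_of_le hq (hQQA z.1 z.2)
        have hb : 0 < QB z.2 := lt_of_lt_of_le hq (hQQB z.1 z.2)
        have l1 : Real.logb 2 (Q z) ≤ 0 := Real.logb_nonpos one_lt_two (hQ0 z) (hQle z)
        have l2 : Real.logb 2 (QA z.1) ≤ 0 := Real.logb_nonpos one_lt_two (hQA0 _) (hQA1 _)
        have l3 : Real.logb 2 (QB z.2) ≤ 0 := Real.logb_nonpos one_lt_two (hQB0 _) (hQB1 _)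
        have habs : |r z| ≤ -Real.logb 2 (Q z)
            + (-Real.logb 2 (QA z.1) + -Real.logb 2 (QB z.2)) := by
          simp only [hrdef]
          rw [abs_le]
          constructor <;> linarith
        rw [if_neg h]
        calc Q z * |r z| ≤ Q z * (-Real.logb 2 (Q z)
              + (-Real.logb 2 (QA z.1) + -Real.logb 2 (QB z.2))) :=
            mul_le_mul_of_nonneg_left habs (hQ0 z)
          _ = -(Q z * Real.logb 2 (Q z))
              + (-(Q z * Real.logb 2 (QA z.1)) + -(Q z * Real.logb 2 (QB z.2))) := by ring
    have e1 : ∑ z : A × B, -(Q z * Real.logb 2 (Q z))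
        ≤ Real.logb 2 (Fintype.card A) + Real.logb 2 (Fintype.card B) := by
      have := ent_le' Q hQ0 hQ1
      rw [Fintype.card_prod] at this
      calc ∑ z : A × B, -(Q z * Real.logb 2 (Q z))
          ≤ Real.logb 2 ((Fintype.card A * Fintype.card B : ℕ)) := this
        _ = Real.logb 2 (Fintype.card A) + Real.logb 2 (Fintype.card B) := by
            push_cast
            rw [Real.logb_mul (ne_of_gt hcardA) (ne_of_gt hcardB)]
    have e2 : ∑ z : A × B, -(Q z * Real.logb 2 (QA z.1)) ≤ Real.logb 2 (Fintype.card A) := by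
      have heq : ∑ z : A × B, -(Q z * Real.logb 2 (QA z.1))
          = ∑ a, -(QA a * Real.logb 2 (QA a)) := by
        rw [Fintype.sum_prod_type]
        refine Finset.sum_congr rfl fun a _ => ?_
        dsimp only
        rw [Finset.sum_neg_distrib, ← Finset.sum_mul, ← hQA a]
      rw [heq]
      exact ent_le' QA hQA0 hQAsum
    have e3 : ∑ z : A × B, -(Q z * Real.logb 2 (QB z.2)) ≤ Real.logb 2 (Fintype.card B) := by
      have heq : ∑ z : A × B, -(Q z * Real.logb 2 (QB z.2))
          = ∑ b, -(QB b * Real.logb 2 (QB b)) := by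
        rw [Fintype.sum_prod_type_right]
        refine Finset.sum_congr rfl fun b _ => ?_
        dsimp only
        rw [Finset.sum_neg_distrib, ← Finset.sum_mul, ← hQB b]
      rw [heq]
      exact ent_le' QB hQB0 hQBsum
    rw [Finset.sum_add_distrib, Finset.sum_add_distrib] at step1
    linarith [step1, e1, e2, e3]
  have hC0 : (0:ℝ) ≤ (2:ℝ) ^ E := Real.rpow_nonneg (by norm_num) E
  -- per-term bound
  have key : ∀ w ∈ (univ : Finset ((Fin n → A) × (Fin n → B))).filter (fun w =>
        ∀ z : A × B,
          |((univ.filter (fun i : Fin n => (w.1 i, w.2 i) = z)).card : ℝ) / n - Q z|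
              ≤ δ * Q z ∧
          (Q z = 0 → (univ.filter (fun i : Fin n => (w.1 i, w.2 i) = z)).card = 0)),
      (∏ i : Fin n, QA (w.1 i)) * ∏ i : Fin n, QB (w.2 i)
        ≤ (∏ i : Fin n, Q (w.1 i, w.2 i)) * (2:ℝ) ^ E := by
    intro w hw
    rw [Finset.mem_filter] at hw
    have hw' := hw.2
    -- positivity on the sequence
    have hgne : ∀ i : Fin n, Q (w.1 i, w.2 i) ≠ 0 := by
      intro i hqi
      have h0 := (hw' (w.1 i, w.2 i)).2 hqi
      have hmem : i ∈ univ.filter (fun i' : Fin n => (w.1 i', w.2 i') = (w.1 i, w.2 i)) := by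
        simp
      have h0' : (univ.filter (fun i' : Fin n => (w.1 i', w.2 i') = (w.1 i, w.2 i))) = ∅ :=
        Finset.card_eq_zero.mp h0
      rw [h0'] at hmem
      exact absurd hmem (Finset.notMem_empty i)
    have hQg : ∀ i, 0 < Q (w.1 i, w.2 i) := fun i =>
      lt_of_le_of_ne (hQ0 _) (Ne.symm (hgne i))
    have hQAg : ∀ i, 0 < QA (w.1 i) := fun i => lt_of_lt_of_le (hQg i) (hQQA (w.1 i) (w.2 i))
    have hQBg : ∀ i, 0 < QB (w.2 i) := fun i => lt_of_lt_of_le (hQg i) (hQQB (w.1 i) (w.2 i))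
    have hPApos : 0 < ∏ i : Fin n, QA (w.1 i) := Finset.prod_pos fun i _ => hQAg i
    have hPBpos : 0 < ∏ i : Fin n, QB (w.2 i) := Finset.prod_pos fun i _ => hQBg i
    have hGpos : 0 < ∏ i : Fin n, Q (w.1 i, w.2 i) := Finset.prod_pos fun i _ => hQg i
    -- deviation bound for counts
    have hN : ∀ z : A × B, Q z ≠ 0 →
        |((univ.filter (fun i : Fin n => (w.1 i, w.2 i) = z)).card : ℝ) - n * Q z|
          ≤ n * (δ * Q z) := by
      intro z hz
      rcases Nat.eq_zero_or_pos n with hn | hn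
      · subst hn
        simp
      · have h1 := (hw' z).1
        have hn' : (0:ℝ) < n := by exact_mod_cast hn
        have heq : ((univ.filter (fun i : Fin n => (w.1 i, w.2 i) = z)).card : ℝ) - n * Q z
            = n * (((univ.filter (fun i : Fin n => (w.1 i, w.2 i) = z)).card : ℝ) / n - Q z) := by
          field_simp
        rw [heq, abs_mul, abs_of_pos hn']
        exact mul_le_mul_of_nonneg_left h1 hn'.le
    -- the key sum inequality
    have hsum : (n:ℝ) * (I - 2 * δ * L) ≤ ∑ i : Fin n, r (w.1 i, w.2 i) := by
      have hcount : ∑ i : Fin n, r (w.1 i, w.2 i)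
          = ∑ z : A × B, ((univ.filter (fun i : Fin n => (w.1 i, w.2 i) = z)).card : ℝ) * r z :=
        count_sum' (fun i => (w.1 i, w.2 i)) r
      have hpt : ∀ z : A × B,
          (if Q z = 0 then 0 else ((n:ℝ) * Q z * r z - (n:ℝ) * (δ * Q z) * |r z|))
            ≤ ((univ.filter (fun i : Fin n => (w.1 i, w.2 i) = z)).card : ℝ) * r z := by
        intro z
        by_cases h : Q z = 0
        · rw [if_pos h, (hw' z).2 h]
          simp
        · rw [if_neg h]
          have habs := hN z h
          have hna := neg_abs_le
            ((((univ.filter (fun i : Fin n => (w.1 i, w.2 i) = z)).card : ℝ) - n * Q z) * r z)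
          rw [abs_mul] at hna
          nlinarith [abs_nonneg (r z), habs, hna]
      have hsplit : ∑ z : A × B,
          (if Q z = 0 then 0 else ((n:ℝ) * Q z * r z - (n:ℝ) * (δ * Q z) * |r z|))
          = (n:ℝ) * I - (n:ℝ) * δ * ∑ z, (if Q z = 0 then 0 else Q z * |r z|) := by
        rw [hIr, Finset.mul_sum, Finset.mul_sum, ← Finset.sum_sub_distrib]
        refine Finset.sum_congr rfl fun z _ => ?_
        by_cases h : Q z = 0
        · simp [h]
        · rw [if_neg h, if_neg h, if_neg h]
          ring
      have hge : (n:ℝ) * I - (n:ℝ) * δ * ∑ z, (if Q z = 0 then 0 else Q z * |r z|)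
          ≤ ∑ i : Fin n, r (w.1 i, w.2 i) := by
        rw [hcount, ← hsplit]
        exact Finset.sum_le_sum fun z _ => hpt z
      have hTn : (n:ℝ) * δ * ∑ z, (if Q z = 0 then 0 else Q z * |r z|)
          ≤ (n:ℝ) * δ * (2 * L) := by
        apply mul_le_mul_of_nonneg_left hT
        positivity
      nlinarith [hge, hTn]
    -- logarithmic comparison
    have hlog : Real.logb 2 ((∏ i : Fin n, QA (w.1 i)) * ∏ i : Fin n, QB (w.2 i))
        ≤ Real.logb 2 ((∏ i : Fin n, Q (w.1 i, w.2 i)) * (2:ℝ) ^ E) := by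
      rw [Real.logb_mul (ne_of_gt hPApos) (ne_of_gt hPBpos),
        Real.logb_mul (ne_of_gt hGpos) (by positivity),
        Real.logb_rpow (by norm_num) (by norm_num),
        Real.logb_prod _ _ (fun i _ => ne_of_gt (hQAg i)),
        Real.logb_prod _ _ (fun i _ => ne_of_gt (hQBg i)),
        Real.logb_prod _ _ (fun i _ => ne_of_gt (hQg i))]
      have hrsum : ∑ i : Fin n, r (w.1 i, w.2 i)
          = ∑ i : Fin n, Real.logb 2 (Q (w.1 i, w.2 i))
            - ∑ i : Fin n, Real.logb 2 (QA (w.1 i))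
            - ∑ i : Fin n, Real.logb 2 (QB (w.2 i)) := by
        rw [← Finset.sum_sub_distrib, ← Finset.sum_sub_distrib]
      rw [hEdef]
      linarith [hsum, hrsum.symm.le, hrsum.le]
    calc (∏ i : Fin n, QA (w.1 i)) * ∏ i : Fin n, QB (w.2 i)
        = (2:ℝ) ^ Real.logb 2 ((∏ i : Fin n, QA (w.1 i)) * ∏ i : Fin n, QB (w.2 i)) :=
          (Real.rpow_logb (by norm_num) (by norm_num) (mul_pos hPApos hPBpos)).symm
      _ ≤ (2:ℝ) ^ Real.logb 2 ((∏ i : Fin n, Q (w.1 i, w.2 i)) * (2:ℝ) ^ E) :=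
          (Real.rpow_le_rpow_left_iff one_lt_two).mpr hlog
      _ = (∏ i : Fin n, Q (w.1 i, w.2 i)) * (2:ℝ) ^ E :=
          Real.rpow_logb (by norm_num) (by norm_num)
            (mul_pos hGpos (by positivity))
  -- total probability
  have htot : ∑ w : (Fin n → A) × (Fin n → B), ∏ i : Fin n, Q (w.1 i, w.2 i) = 1 := by
    have he : ∑ w : (Fin n → A) × (Fin n → B), ∏ i : Fin n, Q (w.1 i, w.2 i)
        = ∑ f : Fin n → A × B, ∏ i : Fin n, Q (f i) := by
      refine (Fintype.sum_equiv (Equiv.arrowProdEquivProdArrow (Fin n) (fun _ => A) (fun _ => B))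
        (fun f => ∏ i : Fin n, Q (f i))
        (fun w => ∏ i : Fin n, Q (w.1 i, w.2 i)) (fun f => ?_)).symm
      simp [Equiv.arrowProdEquivProdArrow]
    rw [he]
    have hp : ∑ f : Fin n → A × B, ∏ i : Fin n, Q (f i)
        = ∏ _i : Fin n, ∑ z : A × B, Q z := by
      rw [Finset.prod_univ_sum]
      rw [Fintype.piFinset_univ]
    rw [hp, hQ1]
    simp
  calc ∑ w ∈ (univ : Finset ((Fin n → A) × (Fin n → B))).filter (fun w =>
        ∀ z : A × B,
          |((univ.filter (fun i : Fin n => (w.1 i, w.2 i) = z)).card : ℝ) / n - Q z|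
              ≤ δ * Q z ∧
          (Q z = 0 → (univ.filter (fun i : Fin n => (w.1 i, w.2 i) = z)).card = 0)),
        (∏ i : Fin n, QA (w.1 i)) * ∏ i : Fin n, QB (w.2 i)
      ≤ ∑ w ∈ (univ : Finset ((Fin n → A) × (Fin n → B))).filter (fun w =>
        ∀ z : A × B,
          |((univ.filter (fun i : Fin n => (w.1 i, w.2 i) = z)).card : ℝ) / n - Q z|
              ≤ δ * Q z ∧
          (Q z = 0 → (univ.filter (fun i : Fin n => (w.1 i, w.2 i) = z)).card = 0)),
        (∏ i : Fin n, Q (w.1 i, w.2 i)) * (2:ℝ) ^ E := Finset.sum_le_sum key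
    _ = (∑ w ∈ (univ : Finset ((Fin n → A) × (Fin n → B))).filter (fun w =>
        ∀ z : A × B,
          |((univ.filter (fun i : Fin n => (w.1 i, w.2 i) = z)).card : ℝ) / n - Q z|
              ≤ δ * Q z ∧
          (Q z = 0 → (univ.filter (fun i : Fin n => (w.1 i, w.2 i) = z)).card = 0)),
        ∏ i : Fin n, Q (w.1 i, w.2 i)) * (2:ℝ) ^ E := by rw [Finset.sum_mul]
    _ ≤ 1 * (2:ℝ) ^ E := by
        refine mul_le_mul_of_nonneg_right ?_ hC0
        rw [← htot]
        exact Finset.sum_le_sum_of_subset_of_nonneg (Finset.filter_subset _ _)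
          (fun w _ _ => Finset.prod_nonneg fun i _ => hQ0 _)
    _ = (2:ℝ) ^ E := one_mul _
end

section
/- Let X₁, X₂, … be i.i.d. random variables taking values in a finite set X, each with entropy H(X) > 0 in bits. For every R with 0 < R < H(X), there exists a sequence of maps φ_n : X^n → {1,…,⌈2^{nR}⌉} such that V(pmf of φ_n(X^n), unif({1,…,⌈2^{nR}⌉})) → 0 as n → ∞. (Intrinsic randomness: below-entropy rates of near-uniform bits can be extracted deterministically from an i.i.d. source.) -/
open Finset


lemma aux_sum_prod {X : Type*} [Fintype X] [DecidableEq X] (n : ℕ) (h : Fin n → X → ℝ) :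
    ∑ v : Fin n → X, ∏ i, h i (v i) = ∏ i, ∑ x, h i x := by
  rw [Finset.prod_univ_sum, Fintype.piFinset_univ]

lemma aux_gsum {X : Type*} [Fintype X] [DecidableEq X] (p : X → ℝ)
    (hp1 : ∑ x, p x = 1) (n : ℕ) (s : Finset (Fin n)) (g : X → ℝ) :
    ∑ v : Fin n → X, (∏ i, p (v i)) * ∏ i ∈ s, g (v i)
      = (∑ x, p x * g x) ^ s.card := by
  have key := aux_sum_prod n (fun j y => p y * (if j ∈ s then g y else 1))
  have lhs : ∀ v : Fin n → X,
      (∏ j, (p (v j) * (if j ∈ s then g (v j) else 1)))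
        = (∏ i, p (v i)) * ∏ i ∈ s, g (v i) := by
    intro v
    rw [Finset.prod_mul_distrib]
    congr 1
    rw [Finset.prod_ite_mem, Finset.univ_inter]
  have rhs : (∏ j : Fin n, ∑ y, p y * (if j ∈ s then g y else 1))
      = (∑ x, p x * g x) ^ s.card := by
    have : ∀ j : Fin n, (∑ y, p y * (if j ∈ s then g y else 1))
        = (if j ∈ s then (∑ x, p x * g x) else 1) := by
      intro j
      by_cases hj : j ∈ s <;> simp [hj, hp1]
    rw [Finset.prod_congr rfl (fun j _ => this j), Finset.prod_ite_mem,
      Finset.univ_inter, Finset.prod_const]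
  calc ∑ v : Fin n → X, (∏ i, p (v i)) * ∏ i ∈ s, g (v i)
      = ∑ v : Fin n → X, ∏ j, (p (v j) * (if j ∈ s then g (v j) else 1)) := by
        exact Finset.sum_congr rfl (fun v _ => (lhs v).symm)
    _ = ∏ j : Fin n, ∑ y, p y * (if j ∈ s then g y else 1) := key
    _ = (∑ x, p x * g x) ^ s.card := rhs

lemma aux_q1 {X : Type*} [Fintype X] [DecidableEq X] (p : X → ℝ)
    (hp1 : ∑ x, p x = 1) (n : ℕ) :
    ∑ v : Fin n → X, (∏ i, p (v i)) = 1 := by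
  have := aux_gsum p hp1 n ∅ (fun _ => (1:ℝ))
  simpa using this

lemma aux_single {X : Type*} [Fintype X] [DecidableEq X] (p : X → ℝ)
    (hp1 : ∑ x, p x = 1) (n : ℕ) (i : Fin n) (g : X → ℝ) :
    ∑ v : Fin n → X, (∏ j, p (v j)) * g (v i) = ∑ x, p x * g x := by
  have := aux_gsum p hp1 n {i} g
  simpa using this

lemma aux_pair {X : Type*} [Fintype X] [DecidableEq X] (p : X → ℝ)
    (hp1 : ∑ x, p x = 1) (n : ℕ) (i j : Fin n) (hij : i ≠ j) (g : X → ℝ) :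
    ∑ v : Fin n → X, (∏ k, p (v k)) * (g (v i) * g (v j))
      = (∑ x, p x * g x) * (∑ x, p x * g x) := by
  have := aux_gsum p hp1 n {i, j} g
  rw [Finset.card_pair hij] at this
  rw [← sq, ← this]
  refine Finset.sum_congr rfl (fun v _ => ?_)
  rw [Finset.prod_pair hij]

lemma aux_moment2 {X : Type*} [Fintype X] [DecidableEq X] (p : X → ℝ)
    (hp1 : ∑ x, p x = 1) (f : X → ℝ) (n : ℕ) :
    ∑ v : Fin n → X, (∏ i, p (v i)) * (∑ i, f (v i) - n * (∑ x, p x * f x)) ^ 2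
      = n * ((∑ x, p x * (f x * f x)) - (∑ x, p x * f x) * (∑ x, p x * f x)) := by
  set μ := ∑ x, p x * f x with hμ
  set m2 := ∑ x, p x * (f x * f x) with hm2
  -- first moment
  have ES : ∑ v : Fin n → X, (∏ i, p (v i)) * (∑ i, f (v i)) = n * μ := by
    calc ∑ v : Fin n → X, (∏ i, p (v i)) * (∑ i, f (v i))
        = ∑ v : Fin n → X, ∑ i, (∏ j, p (v j)) * f (v i) := by
          exact Finset.sum_congr rfl (fun v _ => Finset.mul_sum _ _ _)
      _ = ∑ i : Fin n, ∑ v : Fin n → X, (∏ j, p (v j)) * f (v i) := Finset.sum_comm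
      _ = ∑ _i : Fin n, μ := Finset.sum_congr rfl (fun i _ => aux_single p hp1 n i f)
      _ = n * μ := by simp [mul_comm]
  -- second moment
  have ES2 : ∑ v : Fin n → X, (∏ i, p (v i)) * (∑ i, f (v i)) ^ 2
      = n * m2 + ((n:ℝ)^2 - n) * (μ * μ) := by
    have step1 : ∀ v : Fin n → X, (∏ i, p (v i)) * (∑ i, f (v i)) ^ 2
        = ∑ i : Fin n, ∑ j : Fin n, (∏ k, p (v k)) * (f (v i) * f (v j)) := by
      intro v
      rw [sq, Finset.sum_mul_sum]
      rw [Finset.mul_sum]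
      refine Finset.sum_congr rfl (fun i _ => ?_)
      rw [Finset.mul_sum]
    have step2 : ∀ i j : Fin n,
        ∑ v : Fin n → X, (∏ k, p (v k)) * (f (v i) * f (v j))
          = if i = j then m2 else μ * μ := by
      intro i j
      by_cases hij : i = j
      · subst hij
        simp only [if_pos rfl]
        exact aux_single p hp1 n i (fun x => f x * f x)
      · rw [if_neg hij]
        exact aux_pair p hp1 n i j hij f
    calc ∑ v : Fin n → X, (∏ i, p (v i)) * (∑ i, f (v i)) ^ 2
        = ∑ v : Fin n → X, ∑ i : Fin n, ∑ j : Fin n,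
            (∏ k, p (v k)) * (f (v i) * f (v j)) :=
          Finset.sum_congr rfl (fun v _ => step1 v)
      _ = ∑ i : Fin n, ∑ j : Fin n, ∑ v : Fin n → X,
            (∏ k, p (v k)) * (f (v i) * f (v j)) := by
          rw [Finset.sum_comm]
          refine Finset.sum_congr rfl (fun i _ => Finset.sum_comm)
      _ = ∑ i : Fin n, ∑ j : Fin n, (if i = j then m2 else μ * μ) :=
          Finset.sum_congr rfl (fun i _ => Finset.sum_congr rfl (fun j _ => step2 i j))
      _ = n * m2 + ((n:ℝ)^2 - n) * (μ * μ) := by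
          have : ∀ i : Fin n, ∑ j : Fin n, (if i = j then m2 else μ * μ)
              = m2 + ((n:ℝ) - 1) * (μ * μ) := by
            intro i
            have h1 : ∀ j : Fin n, (if i = j then m2 else μ * μ)
                = μ * μ + (if i = j then m2 - μ * μ else 0) := by
              intro j; split_ifs <;> ring
            rw [Finset.sum_congr rfl (fun j _ => h1 j), Finset.sum_add_distrib,
              Finset.sum_ite_eq]
            simp
            ring
          rw [Finset.sum_congr rfl (fun i _ => this i)]
          simp
          ring
  -- combine
  have q1 : ∑ v : Fin n → X, (∏ i, p (v i)) = 1 := by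
    have := aux_gsum p hp1 n ∅ (fun _ => (1:ℝ))
    simpa using this
  have expand : ∀ v : Fin n → X,
      (∏ i, p (v i)) * (∑ i, f (v i) - n * μ) ^ 2
        = (∏ i, p (v i)) * (∑ i, f (v i)) ^ 2
          - (2 * (n * μ)) * ((∏ i, p (v i)) * (∑ i, f (v i)))
          + (n * μ)^2 * (∏ i, p (v i)) := by
    intro v; ring
  rw [Finset.sum_congr rfl (fun v _ => expand v)]
  rw [Finset.sum_add_distrib, Finset.sum_sub_distrib, ← Finset.mul_sum, ← Finset.mul_sum,
    ES, ES2, q1]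
  ring

lemma aux_packing {V : Type*} [Fintype V] [DecidableEq V] (q : V → ℝ)
    (hq0 : ∀ v, 0 ≤ q v) (hq1 : ∑ v, q v = 1) (β : ℝ) (hβ : 0 ≤ β)
    (A : Finset V) (hA : ∀ v ∈ A, q v ≤ β)
    (rank : V → ℕ) (hrank : Function.Injective rank) (M : ℕ) (hM : 1 ≤ M) :
    ∃ φ : V → Fin M,
      ∑ k : Fin M, |(∑ v ∈ univ.filter (fun v => φ v = k), q v) - 1 / (M:ℝ)|
        ≤ 2 * (∑ v ∈ Aᶜ, q v) + 2 * M * β := by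
  have hM0 : (0:ℝ) < M := by exact_mod_cast hM
  -- cumulative function
  set F : V → ℝ := fun v => ∑ w ∈ A.filter (fun w => rank w < rank v), q w with hF
  have hF0 : ∀ v, 0 ≤ F v := fun v => Finset.sum_nonneg (fun w _ => hq0 w)
  have hφlt : ∀ v : V, min ⌊F v * M⌋₊ (M - 1) < M :=
    fun v => lt_of_le_of_lt (min_le_right _ _) (Nat.sub_lt (by omega) one_pos)
  set φ : V → Fin M := fun v => ⟨min ⌊F v * M⌋₊ (M - 1), hφlt v⟩ with hφ
  refine ⟨φ, ?_⟩
  -- G m = sum of q over A with rank ≤ rank m, for m ∈ A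
  have hG : ∀ m ∈ A, ∑ w ∈ A.filter (fun w => rank w ≤ rank m), q w = F m + q m := by
    intro m hm
    have hset : A.filter (fun w => rank w ≤ rank m)
        = insert m (A.filter (fun w => rank w < rank m)) := by
      ext w
      simp only [Finset.mem_filter, Finset.mem_insert]
      constructor
      · rintro ⟨hwA, hle⟩
        rcases lt_or_eq_of_le hle with h | h
        · exact Or.inr ⟨hwA, h⟩
        · exact Or.inl (hrank h)
      · rintro (rfl | ⟨hwA, hlt⟩)
        · exact ⟨hm, le_refl _⟩
        · exact ⟨hwA, le_of_lt hlt⟩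
    rw [hset, Finset.sum_insert (by simp), add_comm]
  have hGle1 : ∀ m ∈ A, F m + q m ≤ 1 := by
    intro m hm
    rw [← hG m hm, ← hq1]
    exact Finset.sum_le_sum_of_subset_of_nonneg (Finset.filter_subset _ _ |>.trans
      (Finset.subset_univ _)) (fun v _ _ => hq0 v)
  -- typical / atypical fiber masses
  set typ : Fin M → ℝ := fun k => ∑ v ∈ univ.filter (fun v => φ v = k ∧ v ∈ A), q v with htyp
  set atyp : Fin M → ℝ := fun k => ∑ v ∈ univ.filter (fun v => φ v = k ∧ v ∉ A), q v with hatyp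
  have hsplit : ∀ k : Fin M,
      ∑ v ∈ univ.filter (fun v => φ v = k), q v = typ k + atyp k := by
    intro k
    rw [htyp, hatyp]
    rw [← Finset.sum_filter_add_sum_filter_not (univ.filter (fun v => φ v = k))
      (fun v => v ∈ A) q, Finset.filter_filter, Finset.filter_filter]
  -- bound on each typical bin
  have htypβ : ∀ k : Fin M, typ k ≤ 1 / M + β := by
    intro k
    set B := univ.filter (fun v => φ v = k ∧ v ∈ A) with hB
    rcases Finset.eq_empty_or_nonempty B with hBe | hBne
    · have h0 : typ k = 0 := by
        simp only [htyp]
        rw [← hB, hBe, Finset.sum_empty]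
      rw [h0]
      positivity
    obtain ⟨m, hmB, hmmax⟩ := Finset.exists_max_image B rank hBne
    obtain ⟨v₀, hv₀B, hv₀min⟩ := Finset.exists_min_image B rank hBne
    have hmA : m ∈ A := (Finset.mem_filter.mp hmB).2.2
    have hv₀A : v₀ ∈ A := (Finset.mem_filter.mp hv₀B).2.2
    have hmk : φ m = k := (Finset.mem_filter.mp hmB).2.1
    have hv₀k : φ v₀ = k := (Finset.mem_filter.mp hv₀B).2.1
    -- typ k ≤ (F m + q m) - F v₀
    have hsum : typ k ≤ (F m + q m) - F v₀ := by
      have hsub : B ⊆ A.filter (fun w => rank w ≤ rank m)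
          \ A.filter (fun w => rank w < rank v₀) := by
        intro v hv
        have hvA : v ∈ A := (Finset.mem_filter.mp hv).2.2
        rw [Finset.mem_sdiff]
        refine ⟨Finset.mem_filter.mpr ⟨hvA, hmmax v hv⟩, ?_⟩
        simp only [Finset.mem_filter]
        rintro ⟨-, hlt⟩
        exact absurd (hv₀min v hv) (not_le_of_gt hlt)
      have hsub2 : A.filter (fun w => rank w < rank v₀)
          ⊆ A.filter (fun w => rank w ≤ rank m) := by
        intro w hw
        rw [Finset.mem_filter] at hw ⊢
        exact ⟨hw.1, le_trans (le_of_lt hw.2) (hv₀min m hmB)⟩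
      calc typ k ≤ ∑ v ∈ A.filter (fun w => rank w ≤ rank m)
          \ A.filter (fun w => rank w < rank v₀), q v :=
            Finset.sum_le_sum_of_subset_of_nonneg hsub (fun v _ _ => hq0 v)
        _ = (F m + q m) - F v₀ := by
            rw [Finset.sum_sdiff_eq_sub hsub2, hG m hmA]
    -- F v₀ ≥ k / M
    have hlow : (k : ℝ) / M ≤ F v₀ := by
      have hkv : (k : ℕ) = min ⌊F v₀ * M⌋₊ (M - 1) := by
        rw [← hv₀k]
      have hkle : (k : ℕ) ≤ ⌊F v₀ * M⌋₊ := hkv ▸ min_le_left _ _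
      have : (k : ℝ) ≤ F v₀ * M := by
        calc (k:ℝ) ≤ (⌊F v₀ * M⌋₊ : ℝ) := by exact_mod_cast hkle
          _ ≤ F v₀ * M := Nat.floor_le (mul_nonneg (hF0 v₀) hM0.le)
      exact (div_le_iff₀ hM0).mpr this
    -- F m + q m ≤ (k+1)/M + β
    have hhigh : F m + q m ≤ ((k : ℝ) + 1) / M + β := by
      have hkv : (k : ℕ) = min ⌊F m * M⌋₊ (M - 1) := by rw [← hmk]
      by_cases hcase : (k : ℕ) < M - 1
      · have hfl : ⌊F m * M⌋₊ = (k : ℕ) := by omega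
        have h1 : F m * M < (k : ℝ) + 1 := by
          have := Nat.lt_floor_add_one (F m * M)
          rw [hfl] at this
          exact_mod_cast this
        have h2 : F m < ((k : ℝ) + 1) / M := (lt_div_iff₀ hM0).mpr h1
        have h3 : q m ≤ β := hA m hmA
        linarith
      · have hkM : (k : ℕ) = M - 1 := by omega
        have h1 : F m + q m ≤ 1 := hGle1 m hmA
        have h2 : ((k : ℝ) + 1) / M = 1 := by
          have : ((k : ℕ) : ℝ) + 1 = (M : ℝ) := by
            rw [hkM]; push_cast [Nat.cast_sub hM]; ring
          rw [this, div_self (ne_of_gt hM0)]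
        rw [h2]
        linarith
    have : (F m + q m) - F v₀ ≤ 1 / M + β := by
      have : ((k:ℝ)+1)/M - (k:ℝ)/M = 1/M := by ring
      linarith
    linarith
  -- totals
  have htyptot : ∑ k : Fin M, typ k = ∑ v ∈ A, q v := by
    rw [htyp]
    rw [← Finset.sum_fiberwise_of_maps_to (g := φ) (t := (univ : Finset (Fin M)))
      (fun v _ => Finset.mem_univ _) q]
    refine Finset.sum_congr rfl (fun k _ => ?_)
    refine Finset.sum_congr ?_ (fun _ _ => rfl)
    ext v
    simp [and_comm]
  have hatyptot : ∑ k : Fin M, atyp k = ∑ v ∈ Aᶜ, q v := by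
    rw [hatyp]
    rw [← Finset.sum_fiberwise_of_maps_to (g := φ) (t := (univ : Finset (Fin M)))
      (fun v _ => Finset.mem_univ _) q]
    refine Finset.sum_congr rfl (fun k _ => ?_)
    refine Finset.sum_congr ?_ (fun _ _ => rfl)
    ext v
    simp [and_comm]
  have htotal : ∑ v ∈ A, q v + ∑ v ∈ Aᶜ, q v = 1 := by
    rw [Finset.sum_add_sum_compl, hq1]
  have hatyp0 : ∀ k, 0 ≤ atyp k := fun k => Finset.sum_nonneg (fun v _ => hq0 v)
  have htyp0 : ∀ k, 0 ≤ typ k := fun k => Finset.sum_nonneg (fun v _ => hq0 v)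
  -- per-bin bound
  have hper : ∀ k : Fin M, |(∑ v ∈ univ.filter (fun v => φ v = k), q v) - 1 / M|
      ≤ (1 / M - typ k) + 2 * β + atyp k := by
    intro k
    rw [hsplit k]
    have h1 : |typ k + atyp k - 1 / M| ≤ |typ k - 1 / M| + atyp k := by
      have := abs_add_le (typ k - 1 / M) (atyp k)
      have h2 : |atyp k| = atyp k := abs_of_nonneg (hatyp0 k)
      calc |typ k + atyp k - 1/M| = |(typ k - 1/M) + atyp k| := by ring_nf
        _ ≤ |typ k - 1/M| + |atyp k| := abs_add_le _ _
        _ = |typ k - 1/M| + atyp k := by rw [h2]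
    have h3 : |typ k - 1 / M| ≤ (1 / M - typ k) + 2 * β := by
      rw [abs_sub_le_iff]
      constructor
      · have := htypβ k; linarith
      · linarith [hβ]
    linarith
  calc ∑ k : Fin M, |(∑ v ∈ univ.filter (fun v => φ v = k), q v) - 1 / (M:ℝ)|
      ≤ ∑ k : Fin M, ((1 / M - typ k) + 2 * β + atyp k) :=
        Finset.sum_le_sum (fun k _ => hper k)
    _ = M * (1/M) - ∑ k : Fin M, typ k + M * (2*β) + ∑ k : Fin M, atyp k := by
        rw [Finset.sum_add_distrib, Finset.sum_add_distrib, Finset.sum_sub_distrib]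
        simp [Finset.card_univ, mul_comm]
    _ = 2 * (∑ v ∈ Aᶜ, q v) + 2 * M * β := by
        rw [htyptot, hatyptot, mul_one_div, div_self (ne_of_gt hM0)]
        have := htotal
        linarith [htotal]

lemma aux_cheb {X : Type*} [Fintype X] [DecidableEq X] (p : X → ℝ)
    (hp0 : ∀ x, 0 ≤ p x) (hp1 : ∑ x, p x = 1)
    (μ C : ℝ) (hμ : μ = ∑ x, p x * (-Real.logb 2 (p x)))
    (hC : C = (∑ x, p x * ((-Real.logb 2 (p x)) * (-Real.logb 2 (p x)))) - μ * μ)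
    (δ : ℝ) (hδ : 0 < δ) (n : ℕ) (hn : 1 ≤ n) :
    ∑ v ∈ (univ.filter (fun v : Fin n → X =>
        (∏ i, p (v i)) ≤ (2:ℝ) ^ (-((n:ℝ) * (μ - δ)))))ᶜ, (∏ i, p (v i))
      ≤ C / ((n:ℝ) * δ ^ 2) := by
  set f : X → ℝ := fun x => -Real.logb 2 (p x) with hf
  set β : ℝ := (2:ℝ) ^ (-((n:ℝ) * (μ - δ))) with hβ
  have hβpos : 0 < β := Real.rpow_pos_of_pos two_pos _
  have hn0 : (0:ℝ) < n := by exact_mod_cast hn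
  -- pointwise Chebyshev bound on the bad set
  have key : ∀ v : Fin n → X, v ∈ (univ.filter (fun v : Fin n → X =>
      (∏ i, p (v i)) ≤ β))ᶜ →
      ((n:ℝ) * δ) ^ 2 * (∏ i, p (v i))
        ≤ (∏ i, p (v i)) * (∑ i, f (v i) - n * μ) ^ 2 := by
    intro v hv
    rw [Finset.mem_compl, Finset.mem_filter] at hv
    push_neg at hv
    have hqβ : β < ∏ i, p (v i) := hv (Finset.mem_univ v)
    have hqpos : 0 < ∏ i, p (v i) := lt_trans hβpos hqβ
    have hpos : ∀ i, p (v i) ≠ 0 := by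
      intro i hzero
      have : (∏ i, p (v i)) = 0 := Finset.prod_eq_zero (Finset.mem_univ i) hzero
      rw [this] at hqpos; exact lt_irrefl 0 hqpos
    have hlog : Real.logb 2 (∏ i, p (v i)) = ∑ i, Real.logb 2 (p (v i)) :=
      Real.logb_prod univ _ (fun i _ => hpos i)
    have hS : ∑ i, f (v i) = -Real.logb 2 (∏ i, p (v i)) := by
      rw [hlog, ← Finset.sum_neg_distrib]
    have hlt : Real.logb 2 β < Real.logb 2 (∏ i, p (v i)) :=
      Real.logb_lt_logb one_lt_two hβpos hqβ
    have hlogβ : Real.logb 2 β = -((n:ℝ) * (μ - δ)) :=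
      Real.logb_rpow two_pos (by norm_num)
    have hSlt : ∑ i, f (v i) < (n:ℝ) * μ - n * δ := by
      rw [hS]
      rw [hlogβ] at hlt
      nlinarith [hlt]
    have hsq : ((n:ℝ) * δ) ^ 2 ≤ (∑ i, f (v i) - n * μ) ^ 2 := by
      nlinarith [hSlt, mul_pos hn0 hδ]
    calc ((n:ℝ) * δ) ^ 2 * (∏ i, p (v i))
        ≤ (∑ i, f (v i) - n * μ) ^ 2 * (∏ i, p (v i)) :=
          mul_le_mul_of_nonneg_right hsq (le_of_lt hqpos)
      _ = (∏ i, p (v i)) * (∑ i, f (v i) - n * μ) ^ 2 := mul_comm _ _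
  have hmom := aux_moment2 p hp1 f n
  have hsum1 : ∑ v ∈ (univ.filter (fun v : Fin n → X =>
      (∏ i, p (v i)) ≤ β))ᶜ, ((n:ℝ) * δ) ^ 2 * (∏ i, p (v i))
      ≤ ∑ v ∈ (univ.filter (fun v : Fin n → X =>
      (∏ i, p (v i)) ≤ β))ᶜ, (∏ i, p (v i)) * (∑ i, f (v i) - n * μ) ^ 2 :=
    Finset.sum_le_sum key
  have hsum2 : ∑ v ∈ (univ.filter (fun v : Fin n → X =>
      (∏ i, p (v i)) ≤ β))ᶜ, (∏ i, p (v i)) * (∑ i, f (v i) - n * μ) ^ 2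
      ≤ ∑ v : Fin n → X, (∏ i, p (v i)) * (∑ i, f (v i) - n * μ) ^ 2 :=
    Finset.sum_le_sum_of_subset_of_nonneg (Finset.subset_univ _)
      (fun v _ _ => mul_nonneg (Finset.prod_nonneg (fun i _ => hp0 (v i))) (sq_nonneg _))
  have hfin : ((n:ℝ) * δ) ^ 2 * (∑ v ∈ (univ.filter (fun v : Fin n → X =>
      (∏ i, p (v i)) ≤ β))ᶜ, (∏ i, p (v i))) ≤ (n:ℝ) * C := by
    rw [Finset.mul_sum]
    calc ∑ v ∈ (univ.filter (fun v : Fin n → X => (∏ i, p (v i)) ≤ β))ᶜ,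
          ((n:ℝ) * δ) ^ 2 * (∏ i, p (v i))
        ≤ ∑ v : Fin n → X, (∏ i, p (v i)) * (∑ i, f (v i) - n * μ) ^ 2 :=
          le_trans hsum1 hsum2
      _ = (n:ℝ) * C := by rw [hC, hμ]; exact_mod_cast hmom
  rw [le_div_iff₀ (by positivity)]
  calc (∑ v ∈ (univ.filter (fun v : Fin n → X =>
        (∏ i, p (v i)) ≤ β))ᶜ, (∏ i, p (v i))) * ((n:ℝ) * δ ^ 2)
      = (1 / (n:ℝ)) * (((n:ℝ) * δ) ^ 2 * (∑ v ∈ (univ.filter (fun v : Fin n → X =>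
        (∏ i, p (v i)) ≤ β))ᶜ, (∏ i, p (v i)))) := by
        field_simp
    _ ≤ (1 / (n:ℝ)) * ((n:ℝ) * C) := by
        apply mul_le_mul_of_nonneg_left hfin
        positivity
    _ = C := by field_simp

theorem stmt18 {X : Type*} [Fintype X] [DecidableEq X]
    (p : X → ℝ) (hp0 : ∀ x, 0 ≤ p x) (hp1 : ∑ x, p x = 1)
    (H : ℝ) (hH : H = -∑ x : X, p x * Real.logb 2 (p x)) (hHpos : 0 < H)
    (R : ℝ) (hR0 : 0 < R) (hRH : R < H) :
    ∃ φ : (n : ℕ) → (Fin n → X) → Fin ⌈(2 : ℝ) ^ ((n : ℝ) * R)⌉₊,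
      Filter.Tendsto
        (fun n : ℕ =>
          ∑ k : Fin ⌈(2 : ℝ) ^ ((n : ℝ) * R)⌉₊,
            |(∑ x ∈ (univ : Finset (Fin n → X)).filter (fun x => φ n x = k),
                ∏ i : Fin n, p (x i)) -
              1 / (⌈(2 : ℝ) ^ ((n : ℝ) * R)⌉₊ : ℝ)|)
        Filter.atTop (nhds 0) := by
  classical
  set δ : ℝ := (H - R) / 2 with hδdef
  have hδ : 0 < δ := by rw [hδdef]; linarith
  have hμH : H = ∑ x, p x * (-Real.logb 2 (p x)) := by
    rw [hH]; simp [mul_neg]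
  set C : ℝ := (∑ x, p x * ((-Real.logb 2 (p x)) * (-Real.logb 2 (p x)))) - H * H
    with hCdef
  set β : ℕ → ℝ := fun n => (2:ℝ) ^ (-((n:ℝ) * (H - δ))) with hβdef
  have hβ0 : ∀ n, 0 < β n := fun n => Real.rpow_pos_of_pos two_pos _
  have hM1 : ∀ n : ℕ, 1 ≤ ⌈(2 : ℝ) ^ ((n : ℝ) * R)⌉₊ :=
    fun n => Nat.ceil_pos.mpr (Real.rpow_pos_of_pos two_pos _)
  -- packing per n
  have hpack : ∀ n : ℕ, ∃ φ : (Fin n → X) → Fin ⌈(2 : ℝ) ^ ((n : ℝ) * R)⌉₊,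
      ∑ k : Fin ⌈(2 : ℝ) ^ ((n : ℝ) * R)⌉₊,
        |(∑ v ∈ (univ : Finset (Fin n → X)).filter (fun v => φ v = k),
            ∏ i, p (v i)) - 1 / (⌈(2 : ℝ) ^ ((n : ℝ) * R)⌉₊ : ℝ)|
        ≤ 2 * (∑ v ∈ ((univ : Finset (Fin n → X)).filter
              (fun v => (∏ i, p (v i)) ≤ β n))ᶜ, ∏ i, p (v i))
          + 2 * (⌈(2 : ℝ) ^ ((n : ℝ) * R)⌉₊ : ℝ) * β n := by
    intro n
    exact aux_packing (fun v : Fin n → X => ∏ i, p (v i))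
      (fun v => Finset.prod_nonneg (fun i _ => hp0 (v i)))
      (aux_q1 p hp1 n) (β n) (le_of_lt (hβ0 n))
      ((univ : Finset (Fin n → X)).filter (fun v => (∏ i, p (v i)) ≤ β n))
      (fun v hv => (Finset.mem_filter.mp hv).2)
      (fun v => ((Fintype.equivFin (Fin n → X)) v : ℕ))
      (fun a b h => (Fintype.equivFin (Fin n → X)).injective (Fin.val_injective h))
      _ (hM1 n)
  choose φ hφ using hpack
  refine ⟨φ, ?_⟩
  -- bad mass tends to zero
  have hbad : Filter.Tendsto (fun n : ℕ =>
      ∑ v ∈ ((univ : Finset (Fin n → X)).filter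
        (fun v => (∏ i, p (v i)) ≤ β n))ᶜ, ∏ i, p (v i)) Filter.atTop (nhds 0) := by
    apply squeeze_zero' (g := fun n : ℕ => (C / δ ^ 2) / (n : ℝ))
    · exact Filter.Eventually.of_forall (fun n =>
        Finset.sum_nonneg (fun v _ => Finset.prod_nonneg (fun i _ => hp0 (v i))))
    · filter_upwards [Filter.eventually_ge_atTop 1] with n hn
      have := aux_cheb p hp0 hp1 H C hμH hCdef δ hδ n hn
      have heq : C / ((n:ℝ) * δ ^ 2) = (C / δ ^ 2) / (n : ℝ) := by
        rw [div_div, mul_comm ((n:ℝ)) (δ^2)]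
      rw [← heq]
      exact this
    · exact tendsto_const_div_atTop_nhds_zero_nat _
  -- M * β tends to zero
  have hgeo : Filter.Tendsto (fun n : ℕ => (2:ℝ) ^ (-(n:ℝ) * δ)) Filter.atTop (nhds 0) := by
    have hrw : ∀ n : ℕ, (2:ℝ) ^ (-(n:ℝ) * δ) = ((2:ℝ) ^ (-δ)) ^ n := by
      intro n
      rw [show -(n:ℝ) * δ = -δ * (n:ℝ) by ring, Real.rpow_mul (by norm_num),
        Real.rpow_natCast]
    simp only [hrw]
    exact tendsto_pow_atTop_nhds_zero_of_lt_one
      (Real.rpow_nonneg (by norm_num) _)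
      (Real.rpow_lt_one_of_one_lt_of_neg one_lt_two (by linarith))
  have hMβ : Filter.Tendsto (fun n : ℕ =>
      (⌈(2 : ℝ) ^ ((n : ℝ) * R)⌉₊ : ℝ) * β n) Filter.atTop (nhds 0) := by
    apply squeeze_zero (g := fun n : ℕ => 2 * (2:ℝ) ^ (-(n:ℝ) * δ))
    · intro n
      exact mul_nonneg (Nat.cast_nonneg _) (le_of_lt (hβ0 n))
    · intro n
      have h1 : (⌈(2 : ℝ) ^ ((n : ℝ) * R)⌉₊ : ℝ) ≤ (2:ℝ) ^ ((n:ℝ) * R) + 1 :=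
        le_of_lt (Nat.ceil_lt_add_one (le_of_lt (Real.rpow_pos_of_pos two_pos _)))
      have h2 : (2:ℝ) ^ ((n:ℝ) * R) * β n = (2:ℝ) ^ (-(n:ℝ) * δ) := by
        rw [hβdef]
        rw [← Real.rpow_add two_pos]
        congr 1
        rw [hδdef]; ring
      have h3 : β n ≤ (2:ℝ) ^ (-(n:ℝ) * δ) := by
        rw [hβdef]
        apply Real.rpow_le_rpow_of_exponent_le one_le_two
        have : (H : ℝ) - δ = R + δ := by rw [hδdef]; ring
        rw [this]
        have : (0:ℝ) ≤ (n:ℝ) * R := mul_nonneg (Nat.cast_nonneg _) (le_of_lt hR0)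
        nlinarith [Nat.cast_nonneg (α := ℝ) n, hR0]
      calc (⌈(2 : ℝ) ^ ((n : ℝ) * R)⌉₊ : ℝ) * β n
          ≤ ((2:ℝ) ^ ((n:ℝ) * R) + 1) * β n :=
            mul_le_mul_of_nonneg_right h1 (le_of_lt (hβ0 n))
        _ = (2:ℝ) ^ ((n:ℝ) * R) * β n + β n := by ring
        _ ≤ (2:ℝ) ^ (-(n:ℝ) * δ) + (2:ℝ) ^ (-(n:ℝ) * δ) := by
            rw [h2]; linarith [h3]
        _ = 2 * (2:ℝ) ^ (-(n:ℝ) * δ) := by ring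
    · have := hgeo.const_mul (2:ℝ)
      simpa using this
  -- combine
  apply squeeze_zero (g := fun n : ℕ =>
    2 * (∑ v ∈ ((univ : Finset (Fin n → X)).filter
        (fun v => (∏ i, p (v i)) ≤ β n))ᶜ, ∏ i, p (v i))
      + 2 * (⌈(2 : ℝ) ^ ((n : ℝ) * R)⌉₊ : ℝ) * β n)
  · intro n
    exact Finset.sum_nonneg (fun k _ => abs_nonneg _)
  · intro n
    exact hφ n
  · have h1 := hbad.const_mul (2:ℝ)
    have h2 := hMβ.const_mul (2:ℝ)
    have h3 := h1.add h2
    simp only [mul_zero, add_zero] at h3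
    exact h3.congr (fun n => by ring)
end
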